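/- Let W' be a reflection subgroup of W, let i ∈ {1,2}, and let x ∈ Π_i \ Φ_i(W') (a simple root whose reflection r_x does not lie in W'). Then Δ_i(r_x W' r_x) = r_x · Δ_i(W'). -/

import Mathlib

open Pointwise

/-- The positive linear cone of a subset `A` of a real vector space: finite linear
combinations of elements of `A` with all coefficients nonnegative and at least one
strictly positive. -/
def PLC {V : Type*} [AddCommGroup V] [Module ℝ V] (A : Set V) : Set V :=
  { v | ∃ c : V →₀ ℝ, (∀ a, 0 ≤ c a) ∧ ↑c.support ⊆ A ∧ c ≠ 0 ∧
          v = c.sum fun a t => t • a }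

/-- `altEnd a b m` is the alternating product `⋯ a b a b` … of `m` factors,
ending with `b` (e.g. `altEnd a b 3 = b * a * b`). -/
def altEnd {G : Type*} [Monoid G] : G → G → ℕ → G
  | _, _, 0 => 1
  | a, b, m + 1 => altEnd b a m * b

/-- The class of `z` under the equivalence "being nonzero scalar multiples of each
other" (the class `ẑ`). -/
def rayClass {V : Type*} [AddCommGroup V] [Module ℝ V] (z : V) : Set V :=
  { v | ∃ c : ℝ, c ≠ 0 ∧ v = c • z }

/-- The set `Â = {ẑ : z ∈ A}` of scalar-equivalence classes of elements of `A`. -/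
def rayClasses {V : Type*} [AddCommGroup V] [Module ℝ V] (A : Set V) : Set (Set V) :=
  { C | ∃ z ∈ A, C = rayClass z }

/-- A Coxeter datum `(S, V₁, V₂, Π₁, Π₂, ⟨·,·⟩)` satisfying (D1)–(D5), together with
its associated abstract Coxeter group `W` (a group generated by involutions
`r s`, acting faithfully on `V₁` and `V₂` in the prescribed way, with the pairing
`W`-invariant), the decomposition `Φᵢ = Φᵢ⁺ ⊎ Φᵢ⁻` of the paired root systems, the
`W`-equivariant bijection `φ : Φ₁ → Φ₂` (with inverse `phiInv`), and the reflections
`r_x ∈ T` attached to the roots `x ∈ Φ₁` (`refl₁`) resp. `y ∈ Φ₂` (`refl₂`). -/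
structure CoxeterDatum (S : Type*) (V₁ : Type*) (V₂ : Type*) (W : Type*)
    [AddCommGroup V₁] [Module ℝ V₁] [AddCommGroup V₂] [Module ℝ V₂] [Group W] where
  pair : V₁ →ₗ[ℝ] V₂ →ₗ[ℝ] ℝ
  α : S → V₁
  β : S → V₂
  α_inj : Function.Injective α
  β_inj : Function.Injective β
  D1 : ∀ s, pair (α s) (β s) = 1
  D2a : (0 : V₁) ∉ PLC (Set.range α)
  D2b : (0 : V₂) ∉ PLC (Set.range β)
  D2c : ∀ s, α s ∉ PLC (Set.range α \ {α s})
  D2d : ∀ s, β s ∉ PLC (Set.range β \ {β s})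
  D3 : ∀ s t, s ≠ t → pair (α s) (β t) ≤ 0
  D4 : ∀ s t, pair (α s) (β t) = 0 → pair (α t) (β s) = 0
  D5 : ∀ s t, s ≠ t →
    (∃ m : ℕ, 2 ≤ m ∧ pair (α s) (β t) * pair (α t) (β s) = Real.cos (Real.pi / m) ^ 2) ∨
      1 ≤ pair (α s) (β t) * pair (α t) (β s)
  /-- the Coxeter generators `R = {r s : s ∈ S}` of `W` -/
  r : S → W
  r_gen : Subgroup.closure (Set.range r) = ⊤
  r_ne_one : ∀ s, r s ≠ 1
  r_sq : ∀ s, r s * r s = 1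
  /-- the faithful action of `W` on `V₁` -/
  ρ₁ : W →* Module.End ℝ V₁
  /-- the faithful action of `W` on `V₂` -/
  ρ₂ : W →* Module.End ℝ V₂
  ρ₁_inj : Function.Injective ρ₁
  ρ₂_inj : Function.Injective ρ₂
  hr₁ : ∀ s x, ρ₁ (r s) x = x - (2 * pair x (β s)) • α s
  hr₂ : ∀ s y, ρ₂ (r s) y = y - (2 * pair (α s) y) • β s
  pair_inv : ∀ w x y, pair (ρ₁ w x) (ρ₂ w y) = pair x y
  /-- the `W`-equivariant bijection `φ : Φ₁ → Φ₂` -/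
  phi : V₁ → V₂
  /-- the inverse `φ⁻¹ : Φ₂ → Φ₁` -/
  phiInv : V₂ → V₁
  /-- the reflection `r_x` corresponding to a root `x ∈ Φ₁` -/
  refl₁ : V₁ → W
  /-- the reflection `r_y` corresponding to a root `y ∈ Φ₂` -/
  refl₂ : V₂ → W
  decomp₁ : { v | ∃ w s, v = ρ₁ w (α s) } =
      ({ v | ∃ w s, v = ρ₁ w (α s) } ∩ PLC (Set.range α)) ∪
        (-({ v | ∃ w s, v = ρ₁ w (α s) } ∩ PLC (Set.range α)))
  disj₁ : Disjoint ({ v | ∃ w s, v = ρ₁ w (α s) } ∩ PLC (Set.range α))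
      (-({ v | ∃ w s, v = ρ₁ w (α s) } ∩ PLC (Set.range α)))
  decomp₂ : { v | ∃ w s, v = ρ₂ w (β s) } =
      ({ v | ∃ w s, v = ρ₂ w (β s) } ∩ PLC (Set.range β)) ∪
        (-({ v | ∃ w s, v = ρ₂ w (β s) } ∩ PLC (Set.range β)))
  disj₂ : Disjoint ({ v | ∃ w s, v = ρ₂ w (β s) } ∩ PLC (Set.range β))
      (-({ v | ∃ w s, v = ρ₂ w (β s) } ∩ PLC (Set.range β)))
  phi_mem : ∀ x ∈ { v | ∃ w s, v = ρ₁ w (α s) }, phi x ∈ { v | ∃ w s, v = ρ₂ w (β s) }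
  phiInv_mem : ∀ y ∈ { v | ∃ w s, v = ρ₂ w (β s) }, phiInv y ∈ { v | ∃ w s, v = ρ₁ w (α s) }
  phiInv_phi : ∀ x ∈ { v | ∃ w s, v = ρ₁ w (α s) }, phiInv (phi x) = x
  phi_phiInv : ∀ y ∈ { v | ∃ w s, v = ρ₂ w (β s) }, phi (phiInv y) = y
  phi_simple : ∀ s, phi (α s) = β s
  phi_equiv : ∀ w, ∀ x ∈ { v | ∃ w s, v = ρ₁ w (α s) }, phi (ρ₁ w x) = ρ₂ w (phi x)
  refl₁_eq : ∀ w s, refl₁ (ρ₁ w (α s)) = w * r s * w⁻¹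
  refl₂_eq : ∀ w s, refl₂ (ρ₂ w (β s)) = w * r s * w⁻¹
  refl₁_act : ∀ x ∈ { v | ∃ w s, v = ρ₁ w (α s) }, ∀ v,
      ρ₁ (refl₁ x) v = v - (2 * pair v (phi x)) • x
  refl₂_act : ∀ y ∈ { v | ∃ w s, v = ρ₂ w (β s) }, ∀ v,
      ρ₂ (refl₂ y) v = v - (2 * pair (phiInv y) v) • y

namespace CoxeterDatum

variable {S V₁ V₂ W : Type*} [AddCommGroup V₁] [Module ℝ V₁]
  [AddCommGroup V₂] [Module ℝ V₂] [Group W]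

variable (D : CoxeterDatum S V₁ V₂ W)

/-- The root system `Φ₁ = W Π₁`. -/
def Phi₁ : Set V₁ := { v | ∃ w s, v = D.ρ₁ w (D.α s) }

/-- The root system `Φ₂ = W Π₂`. -/
def Phi₂ : Set V₂ := { v | ∃ w s, v = D.ρ₂ w (D.β s) }

/-- The positive roots `Φ₁⁺ = Φ₁ ∩ PLC Π₁`. -/
def PhiPos₁ : Set V₁ := D.Phi₁ ∩ PLC (Set.range D.α)

/-- The positive roots `Φ₂⁺ = Φ₂ ∩ PLC Π₂`. -/
def PhiPos₂ : Set V₂ := D.Phi₂ ∩ PLC (Set.range D.β)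

/-- The negative roots `Φ₁⁻ = -Φ₁⁺`. -/
def PhiNeg₁ : Set V₁ := -D.PhiPos₁

/-- The negative roots `Φ₂⁻ = -Φ₂⁺`. -/
def PhiNeg₂ : Set V₂ := -D.PhiPos₂

/-- The set `T = ⋃_{w ∈ W} w R w⁻¹` of reflections of `W`. -/
def T : Set W := { t | ∃ w s, t = w * D.r s * w⁻¹ }

/-- The length function `ℓ` of `W` with respect to the Coxeter generators `R`. -/
noncomputable def len (w : W) : ℕ :=
  sInf { n | ∃ l : List S, l.length = n ∧ (l.map D.r).prod = w }

/-- `N̄ w = {t ∈ T : ℓ(w t) < ℓ(w)}`. -/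
noncomputable def Nbar (w : W) : Set W :=
  { t | t ∈ D.T ∧ D.len (w * t) < D.len w }

/-- `N₁ w = {ẑ : z ∈ Φ₁⁺, w z ∈ Φ₁⁻}`. -/
def N₁ (w : W) : Set (Set V₁) :=
  { C | ∃ z, z ∈ D.PhiPos₁ ∧ D.ρ₁ w z ∈ D.PhiNeg₁ ∧ C = rayClass z }

/-- `N₂ w = {ẑ : z ∈ Φ₂⁺, w z ∈ Φ₂⁻}`. -/
def N₂ (w : W) : Set (Set V₂) :=
  { C | ∃ z, z ∈ D.PhiPos₂ ∧ D.ρ₂ w z ∈ D.PhiNeg₂ ∧ C = rayClass z }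

/-- A subgroup `W'` of `W` is a reflection subgroup when `W' = ⟨W' ∩ T⟩`. -/
def IsReflectionSubgroup (W' : Subgroup W) : Prop :=
  W' = Subgroup.closure ((W' : Set W) ∩ D.T)

/-- `Φ₁(W') = {x ∈ Φ₁ : r_x ∈ W'}`. -/
def PhiSub₁ (W' : Subgroup W) : Set V₁ :=
  { x | x ∈ D.Phi₁ ∧ D.refl₁ x ∈ W' }

/-- `Φ₂(W') = {y ∈ Φ₂ : r_y ∈ W'}`. -/
def PhiSub₂ (W' : Subgroup W) : Set V₂ :=
  { y | y ∈ D.Phi₂ ∧ D.refl₂ y ∈ W' }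

/-- The canonical generators `S(W') = {t ∈ T : N̄(t) ∩ W' = {t}}`. -/
noncomputable def SW (W' : Subgroup W) : Set W :=
  { t | t ∈ D.T ∧ D.Nbar t ∩ (W' : Set W) = {t} }

/-- `Δ₁(W') = {x ∈ Φ₁⁺ : r_x ∈ S(W')}`. -/
noncomputable def Delta₁ (W' : Subgroup W) : Set V₁ :=
  { x | x ∈ D.PhiPos₁ ∧ D.refl₁ x ∈ D.SW W' }

/-- `Δ₂(W') = {y ∈ Φ₂⁺ : r_y ∈ S(W')}`. -/
noncomputable def Delta₂ (W' : Subgroup W) : Set V₂ :=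
  { y | y ∈ D.PhiPos₂ ∧ D.refl₂ y ∈ D.SW W' }

/-- The length function `ℓ_{W'}` of a reflection subgroup `W'` with respect to its
canonical generators `S(W')`. -/
noncomputable def lenIn (W' : Subgroup W) (w : W) : ℕ :=
  sInf { n | ∃ l : List W, l.length = n ∧ (∀ t ∈ l, t ∈ D.SW W') ∧ l.prod = w }

end CoxeterDatum

section PLCLemmas

variable {V : Type*} [AddCommGroup V] [Module ℝ V] {A : Set V} {a b : V}

theorem PLC.add (ha : a ∈ PLC A) (hb : b ∈ PLC A) : a + b ∈ PLC A := by
  obtain ⟨c, hc0, hcs, hcne, hcsum⟩ := ha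
  obtain ⟨d, hd0, hds, hdne, hdsum⟩ := hb
  refine ⟨c + d, fun x => add_nonneg (hc0 x) (hd0 x), ?_, ?_, ?_⟩
  · classical
    refine subset_trans (Finset.coe_subset.2 (Finsupp.support_add)) ?_
    rw [Finset.coe_union]; exact Set.union_subset hcs hds
  · intro h
    apply hcne
    ext x
    have h1 := congrFun (congrArg DFunLike.coe h) x
    simp only [Finsupp.add_apply, Finsupp.coe_zero, Pi.zero_apply] at h1 ⊢
    have := hd0 x
    linarith [hc0 x]
  · rw [hcsum, hdsum]
    exact (Finsupp.sum_add_index' (fun x => zero_smul ℝ x) (fun x t₁ t₂ => add_smul t₁ t₂ x)).symm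

theorem PLC.smul {c : ℝ} (hc : 0 < c) (ha : a ∈ PLC A) : c • a ∈ PLC A := by
  obtain ⟨f, hf0, hfs, hfne, hfsum⟩ := ha
  refine ⟨c • f, fun x => by
      simp only [Finsupp.smul_apply, smul_eq_mul]; exact mul_nonneg hc.le (hf0 x), ?_, ?_, ?_⟩
  · rwa [Finsupp.support_smul_eq hc.ne']
  · simp only [ne_eq, smul_eq_zero, hc.ne', false_or]; exact hfne
  · rw [hfsum]
    rw [Finsupp.sum_smul_index (fun x => zero_smul ℝ x), Finsupp.smul_sum]
    exact Finsupp.sum_congr (fun x _ => (mul_smul c (f x) x).symm)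

theorem Finsupp.sum_single_smul {V : Type*} [AddCommGroup V] [Module ℝ V] (a : V) (b : ℝ) :
    (Finsupp.single a b).sum (fun x t => t • x) = b • a :=
  Finsupp.sum_single_index (zero_smul ℝ a)

theorem PLC.single {x : V} (hx : x ∈ A) (hxne : x ≠ 0) : x ∈ PLC A := by
  refine ⟨Finsupp.single x 1, fun a => ?_, ?_, ?_, ?_⟩
  · classical
    rcases eq_or_ne a x with rfl | h
    · simp
    · exact le_of_eq (Finsupp.single_eq_of_ne' (Ne.symm h)).symm
  · refine subset_trans (Finset.coe_subset.2 Finsupp.support_single_subset) (by simpa)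
  · simp [Finsupp.single_eq_zero]
  · rw [Finsupp.sum_single_index (zero_smul ℝ x), one_smul]

end PLCLemmas

namespace CoxeterDatum

variable {S V₁ V₂ W : Type*} [AddCommGroup V₁] [Module ℝ V₁]
  [AddCommGroup V₂] [Module ℝ V₂] [Group W]

variable (D : CoxeterDatum S V₁ V₂ W)

theorem rho₁_mul_apply (u v : W) (x : V₁) : D.ρ₁ (u * v) x = D.ρ₁ u (D.ρ₁ v x) := by
  rw [map_mul]; rfl

theorem rho₂_mul_apply (u v : W) (x : V₂) : D.ρ₂ (u * v) x = D.ρ₂ u (D.ρ₂ v x) := by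
  rw [map_mul]; rfl

theorem rho₁_one_apply (x : V₁) : D.ρ₁ 1 x = x := by rw [map_one]; rfl

theorem rho₂_one_apply (x : V₂) : D.ρ₂ 1 x = x := by rw [map_one]; rfl

theorem rho₁_inv_apply (w : W) (x : V₁) : D.ρ₁ w⁻¹ (D.ρ₁ w x) = x := by
  rw [← D.rho₁_mul_apply, inv_mul_cancel, D.rho₁_one_apply]

theorem mem_Phi₁_alpha (s : S) : D.α s ∈ D.Phi₁ := ⟨1, s, (D.rho₁_one_apply _).symm⟩

theorem Phi₁_stable {x : V₁} (hx : x ∈ D.Phi₁) (w : W) : D.ρ₁ w x ∈ D.Phi₁ := by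
  obtain ⟨u, s, rfl⟩ := hx
  exact ⟨w * u, s, (D.rho₁_mul_apply _ _ _).symm⟩

theorem Phi₂_stable {y : V₂} (hy : y ∈ D.Phi₂) (w : W) : D.ρ₂ w y ∈ D.Phi₂ := by
  obtain ⟨u, s, rfl⟩ := hy
  exact ⟨w * u, s, (D.rho₂_mul_apply _ _ _).symm⟩

theorem rho_r_alpha (s : S) : D.ρ₁ (D.r s) (D.α s) = -D.α s := by
  rw [D.hr₁, D.D1]
  module

theorem neg_mem_Phi₁ {x : V₁} (hx : x ∈ D.Phi₁) : -x ∈ D.Phi₁ := by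
  obtain ⟨u, s, rfl⟩ := hx
  refine ⟨u * D.r s, s, ?_⟩
  rw [D.rho₁_mul_apply, D.rho_r_alpha, map_neg]

theorem pos_or_neg {x : V₁} (hx : x ∈ D.Phi₁) : x ∈ D.PhiPos₁ ∨ -x ∈ D.PhiPos₁ := by
  have := D.decomp₁
  rw [Set.Subset.antisymm_iff] at this
  rcases this.1 hx with h | h
  · exact Or.inl h
  · exact Or.inr (Set.mem_neg.1 h)

theorem not_pos_and_negpos {x : V₁} (h1 : x ∈ D.PhiPos₁) (h2 : -x ∈ D.PhiPos₁) : False := by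
  have := D.disj₁
  exact Set.disjoint_left.1 this h1 (Set.mem_neg.2 h2)

theorem root_ne_zero {x : V₁} (hx : x ∈ D.Phi₁) : x ≠ 0 := by
  intro h
  rcases D.pos_or_neg hx with hp | hp <;>
    · rw [h] at hp
      first
        | exact D.D2a hp.2
        | · rw [neg_zero] at hp; exact D.D2a hp.2

theorem alpha_mem_pos (s : S) : D.α s ∈ D.PhiPos₁ := by
  refine ⟨D.mem_Phi₁_alpha s, PLC.single ⟨s, rfl⟩ (D.root_ne_zero (D.mem_Phi₁_alpha s))⟩

theorem refl₁_rho (w : W) {x : V₁} (hx : x ∈ D.Phi₁) :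
    D.refl₁ (D.ρ₁ w x) = w * D.refl₁ x * w⁻¹ := by
  obtain ⟨u, s, rfl⟩ := hx
  rw [← D.rho₁_mul_apply, D.refl₁_eq, D.refl₁_eq, mul_assoc, mul_assoc, mul_assoc,
    mul_inv_rev]
  group

theorem refl₁_alpha (s : S) : D.refl₁ (D.α s) = D.r s := by
  have := D.refl₁_eq 1 s
  rwa [D.rho₁_one_apply, one_mul, inv_one, mul_one] at this

theorem refl₁_mul_self {x : V₁} (hx : x ∈ D.Phi₁) : D.refl₁ x * D.refl₁ x = 1 := by
  obtain ⟨u, s, rfl⟩ := hx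
  rw [D.refl₁_eq, show (u * D.r s * u⁻¹) * (u * D.r s * u⁻¹) = u * (D.r s * D.r s) * u⁻¹ by
    group, D.r_sq, mul_one, mul_inv_cancel]

theorem refl₁_root_eq_neg {x : V₁} (hx : x ∈ D.Phi₁) : D.ρ₁ (D.refl₁ x) x = -x := by
  obtain ⟨u, s, rfl⟩ := hx
  rw [D.refl₁_eq, D.rho₁_mul_apply, D.rho₁_mul_apply, D.rho₁_inv_apply, D.rho_r_alpha,
    map_neg]

theorem pair_phi_self {x : V₁} (hx : x ∈ D.Phi₁) : D.pair x (D.phi x) = 1 := by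
  have h3 : x - (2 * D.pair x (D.phi x)) • x = -x := by
    rw [← D.refl₁_act x hx x, D.refl₁_root_eq_neg hx]
  have h4 : (2 * D.pair x (D.phi x)) • x = (2 : ℝ) • x := by
    calc (2 * D.pair x (D.phi x)) • x = x - (x - (2 * D.pair x (D.phi x)) • x) := by module
      _ = x - (-x) := by rw [h3]
      _ = (2 : ℝ) • x := by module
  have h5 : ((2 * D.pair x (D.phi x)) - 2 : ℝ) • x = 0 := by rw [sub_smul, h4, sub_self]
  rcases smul_eq_zero.1 h5 with h | h
  · linarith
  · exact absurd h (D.root_ne_zero hx)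

theorem phi_mem_Phi₂ {x : V₁} (hx : x ∈ D.Phi₁) : D.phi x ∈ D.Phi₂ := D.phi_mem x hx

theorem phiInv_mem_Phi₁ {y : V₂} (hy : y ∈ D.Phi₂) : D.phiInv y ∈ D.Phi₁ := D.phiInv_mem y hy

theorem phiInv_beta (s : S) : D.phiInv (D.β s) = D.α s := by
  rw [← D.phi_simple, D.phiInv_phi _ (D.mem_Phi₁_alpha s)]

theorem phiInv_rho (w : W) {y : V₂} (hy : y ∈ D.Phi₂) :
    D.phiInv (D.ρ₂ w y) = D.ρ₁ w (D.phiInv y) := by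
  have h1 : D.phi (D.ρ₁ w (D.phiInv y)) = D.ρ₂ w y := by
    rw [D.phi_equiv w _ (D.phiInv_mem y hy), D.phi_phiInv y hy]
  rw [← h1, D.phiInv_phi _ (D.Phi₁_stable (D.phiInv_mem y hy) w)]

theorem phi_rho (w : W) {x : V₁} (hx : x ∈ D.Phi₁) :
    D.phi (D.ρ₁ w x) = D.ρ₂ w (D.phi x) := D.phi_equiv w x hx

theorem rho₂_refl₁ {x : V₁} (hx : x ∈ D.Phi₁) (v : V₂) :
    D.ρ₂ (D.refl₁ x) v = v - (2 * D.pair x v) • D.phi x := by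
  obtain ⟨u, t, rfl⟩ := hx
  have hphi : D.phi (D.ρ₁ u (D.α t)) = D.ρ₂ u (D.β t) := by
    rw [D.phi_rho u (D.mem_Phi₁_alpha t), D.phi_simple]
  have hrefl : D.refl₂ (D.phi (D.ρ₁ u (D.α t))) = D.refl₁ (D.ρ₁ u (D.α t)) := by
    rw [hphi, D.refl₂_eq, D.refl₁_eq]
  have hmem : D.phi (D.ρ₁ u (D.α t)) ∈ D.Phi₂ := by
    rw [hphi]; exact D.Phi₂_stable ⟨1, t, (D.rho₂_one_apply _).symm⟩ u
  have := D.refl₂_act _ hmem v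
  rw [hrefl, D.phiInv_phi _ ⟨u, t, rfl⟩] at this
  exact this

theorem crux {x : V₁} (hx : x ∈ D.Phi₁) {c : ℝ} (hc : c ≠ 0) {p : S} (hxc : x = c • D.α p) :
    D.refl₁ x = D.r p := by
  have hP3 : c * D.pair (D.α p) (D.phi x) = 1 := by
    have h := D.pair_phi_self hx
    nth_rewrite 1 [hxc] at h
    simpa [map_smul, smul_eq_mul] using h
  -- action of refl₁ x * r p on V₁
  have hcoef : ∀ v, D.ρ₁ (D.refl₁ x * D.r p) v =
      v + (2 * D.pair v (D.β p) - 2 * c * D.pair v (D.phi x)) • D.α p := by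
    intro v
    set Fx := D.phi x with hFx
    rw [D.rho₁_mul_apply, D.hr₁, D.refl₁_act x hx, ← hFx, hxc]
    simp only [map_sub, map_smul, LinearMap.sub_apply, LinearMap.smul_apply, smul_eq_mul,
      D.D1]
    match_scalars
    · ring
    · linear_combination (4 * D.pair v (D.β p)) * hP3
  -- action on V₂ at `β p`
  have hact2 : D.ρ₂ (D.refl₁ x * D.r p) (D.β p) = -D.β p + (2 * c) • D.phi x := by
    rw [D.rho₂_mul_apply, D.hr₂, D.rho₂_refl₁ hx]
    rw [hxc]
    simp only [map_sub, map_smul, LinearMap.sub_apply, LinearMap.smul_apply, smul_eq_mul,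
      LinearMap.map_smul₂, D.D1]
    match_scalars <;> ring
  -- conclude `c • phi x = β p`
  have hmem2 : D.ρ₂ (D.refl₁ x * D.r p) (D.β p) ∈ D.Phi₂ :=
    D.Phi₂_stable ⟨1, p, (D.rho₂_one_apply _).symm⟩ _
  have hfix : D.phiInv (D.ρ₂ (D.refl₁ x * D.r p) (D.β p)) = D.α p := by
    rw [D.phiInv_rho _ ⟨1, p, (D.rho₂_one_apply _).symm⟩, D.phiInv_beta, hcoef, D.D1]
    have hz0 : (2 * 1 - 2 * c * D.pair (D.α p) (D.phi x) : ℝ) = 0 := by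
      linear_combination (-2 : ℝ) * hP3
    rw [hz0, zero_smul, add_zero]
  have hz : -D.β p + (2 * c) • D.phi x = D.β p := by
    have h := D.phi_phiInv _ hmem2
    rw [hfix, D.phi_simple] at h
    rw [hact2] at h
    exact h.symm
  have hcF : c • D.phi x = D.β p := by
    have h2 : (2 : ℝ) • (c • D.phi x) = (2 : ℝ) • D.β p := by
      linear_combination (norm := module) hz
    exact smul_right_injective V₂ two_ne_zero h2
  have hone : ∀ v, D.ρ₁ (D.refl₁ x * D.r p) v = v := by
    intro v
    rw [hcoef]
    have h3 : c * D.pair v (D.phi x) = D.pair v (D.β p) := by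
      have h4 := congrArg (D.pair v) hcF
      rw [map_smul, smul_eq_mul] at h4
      exact h4
    have hc0 : (2 * D.pair v (D.β p) - 2 * c * D.pair v (D.phi x) : ℝ) = 0 := by
      linear_combination (-2 : ℝ) * h3
    rw [hc0, zero_smul, add_zero]
  have heq : D.refl₁ x * D.r p = 1 := by
    apply D.ρ₁_inj
    apply LinearMap.ext
    intro v
    rw [hone v, map_one]
    rfl
  have hrinv : (D.r p)⁻¹ = D.r p := inv_eq_of_mul_eq_one_left (D.r_sq p)
  calc D.refl₁ x = D.refl₁ x * D.r p * (D.r p)⁻¹ := by group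
    _ = 1 * (D.r p)⁻¹ := by rw [heq]
    _ = D.r p := by rw [one_mul, hrinv]

theorem key_alt {z : V₁} (hz : z ∈ D.PhiPos₁) (s : S) :
    D.ρ₁ (D.r s) z ∈ D.PhiPos₁ ∨ D.refl₁ z = D.r s := by
  classical
  by_cases hpos : D.ρ₁ (D.r s) z ∈ D.PhiPos₁
  · exact Or.inl hpos
  right
  obtain ⟨hzΦ, c, hc0, hcs, hcne, hcsum⟩ := hz
  by_cases hsupp : c.support ⊆ {D.α s}
  · rw [Finsupp.support_subset_singleton] at hsupp
    have hzc : z = c (D.α s) • D.α s := by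
      rw [hcsum, hsupp, Finsupp.sum_single_smul, Finsupp.single_eq_same]
    have hcne' : c (D.α s) ≠ 0 := by
      intro h
      exact hcne (by rw [hsupp, h, Finsupp.single_zero])
    exact D.crux hzΦ hcne' hzc
  exfalso
  obtain ⟨a, has, hane⟩ := Finset.not_subset.1 hsupp
  rw [Finset.mem_singleton] at hane
  have hmem : D.ρ₁ (D.r s) z ∈ D.Phi₁ := D.Phi₁_stable hzΦ _
  have hneg : -(D.ρ₁ (D.r s) z) ∈ D.PhiPos₁ := (D.pos_or_neg hmem).resolve_left hpos
  obtain ⟨-, d, hd0, hds, hdne, hdsum⟩ := hneg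
  set m : ℝ := 2 * D.pair z (D.β s) with hm'
  have hrs : D.ρ₁ (D.r s) z = z - m • D.α s := D.hr₁ s z
  set e := c + d with he
  have hesum : e.sum (fun a t => t • a) = m • D.α s := by
    rw [he, Finsupp.sum_add_index' (fun x => zero_smul ℝ x) (fun x t₁ t₂ => add_smul t₁ t₂ x),
      ← hcsum, ← hdsum, hrs]
    module
  have hea : 0 < e a :=
    add_pos_of_pos_of_nonneg ((hc0 a).lt_of_ne (Ne.symm (Finsupp.mem_support_iff.1 has)))
      (hd0 a)
  set g := e.erase (D.α s) with hg
  have hga : g a = e a := Finsupp.erase_ne hane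
  have hgsupp : ↑g.support ⊆ Set.range D.α \ {D.α s} := by
    rw [hg, Finsupp.support_erase, Finset.coe_erase]
    apply Set.diff_subset_diff_left
    refine subset_trans (Finset.coe_subset.2 Finsupp.support_add) ?_
    rw [Finset.coe_union]; exact Set.union_subset hcs hds
  have hg0 : ∀ b, 0 ≤ g b := by
    intro b
    by_cases hb : b = D.α s
    · subst hb; rw [hg, Finsupp.erase_same]
    · rw [hg, Finsupp.erase_ne hb]
      exact add_nonneg (hc0 b) (hd0 b)
  have hgsum : g.sum (fun a t => t • a) = (m - e (D.α s)) • D.α s := by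
    have h5 : g + Finsupp.single (D.α s) (e (D.α s)) = e := Finsupp.erase_add_single _ _
    have h6 : (g + Finsupp.single (D.α s) (e (D.α s))).sum (fun a t => t • a) =
        e.sum (fun a t => t • a) := by rw [h5]
    rw [Finsupp.sum_add_index' (fun x => zero_smul ℝ x) (fun x t₁ t₂ => add_smul t₁ t₂ x),
      Finsupp.sum_single_smul, hesum] at h6
    linear_combination (norm := module) h6
  have hgane : g a ≠ 0 := by rw [hga]; exact hea.ne'
  have hgne : g ≠ 0 := fun h => hgane (by rw [h]; rfl)
  rcases le_or_gt (m - e (D.α s)) 0 with hmle | hmlt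
  · apply D.D2a
    refine ⟨g + Finsupp.single (D.α s) (-(m - e (D.α s))), ?_, ?_, ?_, ?_⟩
    · intro b
      by_cases hb : b = D.α s
      · subst hb
        rw [Finsupp.add_apply, hg, Finsupp.erase_same, Finsupp.single_eq_same, zero_add]
        linarith
      · rw [Finsupp.add_apply, Finsupp.single_eq_of_ne' (fun h => hb h.symm), add_zero]
        exact hg0 b
    · refine subset_trans (Finset.coe_subset.2 Finsupp.support_add) ?_
      rw [Finset.coe_union]
      refine Set.union_subset (subset_trans hgsupp Set.diff_subset) ?_
      refine subset_trans (Finset.coe_subset.2 Finsupp.support_single_subset) ?_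
      simp only [Finset.coe_singleton, Set.singleton_subset_iff]
      exact ⟨s, rfl⟩
    · intro h
      apply hgane
      have := congrFun (congrArg DFunLike.coe h) a
      simpa [Finsupp.single_eq_of_ne' (fun hh => hane hh.symm)] using this
    · rw [Finsupp.sum_add_index' (fun x => zero_smul ℝ x) (fun x t₁ t₂ => add_smul t₁ t₂ x),
        Finsupp.sum_single_smul, hgsum]
      module
  · apply D.D2c s
    refine ⟨(m - e (D.α s))⁻¹ • g, ?_, ?_, ?_, ?_⟩
    · intro b
      rw [Finsupp.smul_apply, smul_eq_mul]
      exact mul_nonneg (inv_nonneg.2 hmlt.le) (hg0 b)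
    · rwa [Finsupp.support_smul_eq (inv_ne_zero hmlt.ne')]
    · simp only [ne_eq, smul_eq_zero, inv_eq_zero, hmlt.ne', false_or]
      exact hgne
    · rw [Finsupp.sum_smul_index (fun x => zero_smul ℝ x)]
      have h7 : (g.sum fun a t => ((m - e (D.α s))⁻¹ * t) • a) =
          (m - e (D.α s))⁻¹ • g.sum (fun a t => t • a) := by
        rw [Finsupp.smul_sum]
        exact Finsupp.sum_congr fun x _ => mul_smul _ _ _
      rw [h7, hgsum, smul_smul, inv_mul_cancel₀ hmlt.ne', one_smul]

theorem mem_PhiNeg_iff {x : V₁} : x ∈ D.PhiNeg₁ ↔ -x ∈ D.PhiPos₁ := Set.mem_neg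

theorem pos_not_neg {x : V₁} (h : x ∈ D.PhiPos₁) : x ∉ D.PhiNeg₁ := fun h2 =>
  D.not_pos_and_negpos h (D.mem_PhiNeg_iff.1 h2)

theorem pos_of_not_neg {x : V₁} (hx : x ∈ D.Phi₁) (h : x ∉ D.PhiNeg₁) : x ∈ D.PhiPos₁ := by
  rcases D.pos_or_neg hx with h1 | h1
  · exact h1
  · exact absurd (D.mem_PhiNeg_iff.2 h1) h

theorem r_inv (s : S) : (D.r s)⁻¹ = D.r s := inv_eq_of_mul_eq_one_left (D.r_sq s)

theorem prod_reverse_map_r (l : List S) :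
    (l.reverse.map D.r).prod = ((l.map D.r).prod)⁻¹ := by
  induction l with
  | nil => simp
  | cons a l ih =>
    rw [List.reverse_cons, List.map_append, List.prod_append, List.map_cons, List.prod_cons,
      List.map_nil, List.prod_nil, mul_one, ih, List.map_cons, List.prod_cons, mul_inv_rev,
      D.r_inv]

theorem exists_word (w : W) : ∃ l : List S, (l.map D.r).prod = w := by
  have hw : w ∈ Subgroup.closure (Set.range D.r) := by rw [D.r_gen]; trivial
  induction hw using Subgroup.closure_induction with
  | mem x hx => obtain ⟨s, rfl⟩ := hx; exact ⟨[s], by simp⟩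
  | one => exact ⟨[], rfl⟩
  | mul x y hx hy ihx ihy =>
    obtain ⟨l1, h1⟩ := ihx; obtain ⟨l2, h2⟩ := ihy
    exact ⟨l1 ++ l2, by rw [List.map_append, List.prod_append, h1, h2]⟩
  | inv x hx ih =>
    obtain ⟨l, h⟩ := ih
    exact ⟨l.reverse, by rw [D.prod_reverse_map_r, h]⟩

theorem len_spec (w : W) : ∃ l : List S, l.length = D.len w ∧ (l.map D.r).prod = w := by
  have hne : { n | ∃ l : List S, l.length = n ∧ (l.map D.r).prod = w }.Nonempty := by
    obtain ⟨l, hl⟩ := D.exists_word w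
    exact ⟨l.length, l, rfl, hl⟩
  exact Nat.sInf_mem hne

theorem len_le {w : W} {l : List S} (h : (l.map D.r).prod = w) : D.len w ≤ l.length :=
  Nat.sInf_le ⟨l, rfl, h⟩

theorem len_one : D.len 1 = 0 :=
  Nat.le_antisymm (D.len_le (l := []) rfl) (Nat.zero_le _)

theorem eq_one_of_len_zero {w : W} (h : D.len w = 0) : w = 1 := by
  obtain ⟨l, hlen, hprod⟩ := D.len_spec w
  rw [h, List.length_eq_zero_iff] at hlen
  rw [hlen] at hprod
  simpa using hprod.symm

theorem strongExchange {z : V₁} (hz : z ∈ D.PhiPos₁) {w : W} (hneg : D.ρ₁ w z ∈ D.PhiNeg₁) :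
    D.len (w * D.refl₁ z) < D.len w := by
  classical
  obtain ⟨l, hlen, hprod⟩ := D.len_spec w
  set v : ℕ → W := fun j => ((l.drop j).map D.r).prod with hv
  set A : Set ℕ := {j | j ≤ l.length ∧ D.ρ₁ (v j) z ∈ D.PhiNeg₁} with hA
  have h0A : 0 ∈ A := ⟨Nat.zero_le _, by simpa [hv, hprod] using hneg⟩
  have hbdd : BddAbove A := ⟨l.length, fun j hj => hj.1⟩
  set j := sSup A with hj
  have hjA : j ∈ A := Nat.sSup_mem ⟨0, h0A⟩ hbdd
  have hjlt : j < l.length := by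
    rcases lt_or_eq_of_le hjA.1 with h | h
    · exact h
    · exfalso
      have hv1 : v j = 1 := by rw [hv]; simp [h]
      apply D.pos_not_neg hz
      have h2 := hjA.2
      rwa [hv1, D.rho₁_one_apply] at h2
  have hj1 : j + 1 ∉ A := fun hin => Nat.not_succ_le_self j (le_csSup hbdd hin)
  have hy1pos : D.ρ₁ (v (j + 1)) z ∈ D.PhiPos₁ := by
    apply D.pos_of_not_neg (D.Phi₁_stable hz.1 _)
    intro hneg1
    exact hj1 ⟨hjlt, hneg1⟩
  have hdrop : l.drop j = l[j] :: l.drop (j + 1) := List.drop_eq_getElem_cons hjlt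
  have hvj : v j = D.r l[j] * v (j + 1) := by
    show ((l.drop j).map D.r).prod = _
    rw [hdrop, List.map_cons, List.prod_cons]
  have hkey : D.refl₁ (D.ρ₁ (v (j + 1)) z) = D.r l[j] := by
    rcases D.key_alt hy1pos l[j] with h | h
    · exfalso
      apply D.pos_not_neg h
      have h2 := hjA.2
      rwa [hvj, D.rho₁_mul_apply] at h2
    · exact h
  have hconj : D.refl₁ (D.ρ₁ (v (j + 1)) z) = v (j + 1) * D.refl₁ z * (v (j + 1))⁻¹ :=
    D.refl₁_rho _ hz.1
  have hswap : D.r l[j] * v (j + 1) = v (j + 1) * D.refl₁ z := by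
    rw [← hkey, hconj]; group
  have hw' : ((l.take j).map D.r).prod * v j = w := by
    show _ * ((l.drop j).map D.r).prod = w
    rw [← List.prod_append, ← List.map_append, List.take_append_drop, hprod]
  have hwt : (((l.take j ++ l.drop (j + 1)).map D.r).prod) = w * D.refl₁ z := by
    rw [List.map_append, List.prod_append, ← hw', hvj, hswap]
    rw [mul_assoc, mul_assoc, D.refl₁_mul_self hz.1, mul_one]
  have hfin : D.len (w * D.refl₁ z) ≤ (l.take j ++ l.drop (j + 1)).length := D.len_le hwt
  have hlt : (l.take j ++ l.drop (j + 1)).length < l.length := by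
    rw [List.length_append, List.length_take, List.length_drop]
    omega
  exact lt_of_le_of_lt hfin (hlen ▸ hlt)

theorem ascent {z : V₁} (hz : z ∈ D.PhiPos₁) {w : W} (hpos : D.ρ₁ w z ∈ D.PhiPos₁) :
    D.len w < D.len (w * D.refl₁ z) := by
  have hneg : D.ρ₁ (w * D.refl₁ z) z ∈ D.PhiNeg₁ := by
    rw [D.rho₁_mul_apply, D.refl₁_root_eq_neg hz.1, map_neg]
    exact D.mem_PhiNeg_iff.2 (by rwa [neg_neg])
  have := D.strongExchange hz hneg
  rwa [mul_assoc, D.refl₁_mul_self hz.1, mul_one] at this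

theorem refl₁_mem_T {z : V₁} (hz : z ∈ D.Phi₁) : D.refl₁ z ∈ D.T := by
  obtain ⟨u, p, rfl⟩ := hz
  exact ⟨u, p, D.refl₁_eq u p⟩

theorem mem_T_exists {t : W} (ht : t ∈ D.T) : ∃ z ∈ D.PhiPos₁, D.refl₁ z = t := by
  obtain ⟨u, p, rfl⟩ := ht
  have hx : D.ρ₁ u (D.α p) ∈ D.Phi₁ := ⟨u, p, rfl⟩
  rcases D.pos_or_neg hx with hpos | hneg
  · exact ⟨_, hpos, D.refl₁_eq u p⟩
  · refine ⟨_, hneg, ?_⟩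
    have hform : -(D.ρ₁ u (D.α p)) = D.ρ₁ (u * D.r p) (D.α p) := by
      rw [D.rho₁_mul_apply, D.rho_r_alpha, map_neg]
    rw [hform, D.refl₁_eq]
    group

theorem refl₁_ne_one {z : V₁} (hz : z ∈ D.Phi₁) : D.refl₁ z ≠ 1 := by
  intro h
  have h2 := D.refl₁_root_eq_neg hz
  rw [h, D.rho₁_one_apply] at h2
  have h3 : (2 : ℝ) • z = 0 := by linear_combination (norm := module) h2
  rcases smul_eq_zero.1 h3 with h4 | h4
  · norm_num at h4
  · exact D.root_ne_zero hz h4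

theorem len_pos {w : W} (h : w ≠ 1) : 0 < D.len w :=
  Nat.pos_of_ne_zero fun h0 => h (D.eq_one_of_len_zero h0)

theorem sw_conj {W' : Subgroup W} (s : S) (hs : D.r s ∉ W') {t : W} (ht : t ∈ D.SW W') :
    D.r s * t * D.r s ∈ D.SW (Subgroup.map (MulAut.conj (D.r s)).toMonoidHom W') := by
  have htW' : t ∈ W' := by
    have h1 : t ∈ D.Nbar t ∩ (W' : Set W) := ht.2 ▸ Set.mem_singleton t
    exact h1.2
  obtain ⟨zt, hztpos, hztrefl⟩ := D.mem_T_exists ht.1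
  have htt : t * t = 1 := by rw [← hztrefl]; exact D.refl₁_mul_self hztpos.1
  have htne : t ≠ 1 := by rw [← hztrefl]; exact D.refl₁_ne_one hztpos.1
  set t' := D.r s * t * D.r s with ht'
  have ht'T : t' ∈ D.T := by
    obtain ⟨u0, p, hu0⟩ := ht.1
    refine ⟨D.r s * u0, p, ?_⟩
    rw [ht', hu0, mul_inv_rev, D.r_inv]
    group
  have ht't' : t' * t' = 1 := by
    rw [ht']
    calc D.r s * t * D.r s * (D.r s * t * D.r s)
        = D.r s * t * (D.r s * D.r s) * t * D.r s := by group
      _ = D.r s * (t * t) * D.r s := by rw [D.r_sq]; group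
      _ = 1 := by rw [htt, mul_one, D.r_sq]
  have ht'ne : t' ≠ 1 := by
    intro h
    apply htne
    have h2 : t = (D.r s)⁻¹ * t' * (D.r s)⁻¹ := by rw [ht']; group
    rwa [h, D.r_inv, mul_one, D.r_sq] at h2
  refine ⟨ht'T, Set.eq_singleton_iff_unique_mem.2 ⟨⟨⟨ht'T, ?_⟩, ?_⟩, ?_⟩⟩
  · rw [ht't', D.len_one]
    exact D.len_pos ht'ne
  · refine Subgroup.mem_map.2 ⟨t, htW', ?_⟩
    simp only [MulEquiv.coe_toMonoidHom, MulAut.conj_apply, D.r_inv]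
    rfl
  · rintro u' ⟨⟨hu'T, hu'len⟩, hu'W''⟩
    obtain ⟨u, huW', hu_eq⟩ := Subgroup.mem_map.1 hu'W''
    have hu_eq' : u' = D.r s * u * D.r s := by
      rw [← hu_eq]
      simp only [MulEquiv.coe_toMonoidHom, MulAut.conj_apply, D.r_inv]
    have huT : u ∈ D.T := by
      obtain ⟨w0, q, hw0⟩ := hu'T
      have h3 : u = D.r s * u' * D.r s := by
        rw [hu_eq']
        calc u = (D.r s * D.r s) * u * (D.r s * D.r s) := by rw [D.r_sq]; group
          _ = D.r s * (D.r s * u * D.r s) * D.r s := by group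
      rw [h3, hw0]
      exact ⟨D.r s * w0, q, by rw [mul_inv_rev, D.r_inv]; group⟩
    obtain ⟨z₁, hz₁pos, hz₁refl⟩ := D.mem_T_exists huT
    have hune : u ≠ D.r s := fun h => hs (h ▸ huW')
    have hz₁' : D.ρ₁ (D.r s) z₁ ∈ D.PhiPos₁ :=
      (D.key_alt hz₁pos s).resolve_right (by rw [hz₁refl]; exact hune)
    have hreflz₁' : D.refl₁ (D.ρ₁ (D.r s) z₁) = u' := by
      rw [D.refl₁_rho _ hz₁pos.1, hz₁refl, D.r_inv, ← hu_eq']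
    have hneg : D.ρ₁ t' (D.ρ₁ (D.r s) z₁) ∈ D.PhiNeg₁ := by
      by_contra hcon
      have hpos2 := D.pos_of_not_neg (D.Phi₁_stable (D.Phi₁_stable hz₁pos.1 _) _) hcon
      have hasc := D.ascent hz₁' hpos2
      rw [hreflz₁'] at hasc
      omega
    have hcomp : D.ρ₁ t' (D.ρ₁ (D.r s) z₁) = D.ρ₁ (D.r s) (D.ρ₁ t z₁) := by
      rw [← D.rho₁_mul_apply, ← D.rho₁_mul_apply]
      congr 1
      rw [ht', mul_assoc, D.r_sq, mul_one]
    rcases D.pos_or_neg (D.Phi₁_stable hz₁pos.1 t) with hpos3 | hneg3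
    · exfalso
      rcases D.key_alt hpos3 s with h | h
      · exact D.pos_not_neg h (hcomp ▸ hneg)
      · apply hs
        have h4 : D.refl₁ (D.ρ₁ t z₁) = t * u * t⁻¹ := by rw [D.refl₁_rho _ hz₁pos.1, hz₁refl]
        rw [← h, h4]
        exact Subgroup.mul_mem _ (Subgroup.mul_mem _ htW' huW') (Subgroup.inv_mem _ htW')
    · have hmem5 : u ∈ D.Nbar t ∩ (W' : Set W) := by
        refine ⟨⟨huT, ?_⟩, huW'⟩
        rw [← hz₁refl]
        exact D.strongExchange hz₁pos (D.mem_PhiNeg_iff.2 hneg3)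
      rw [ht.2, Set.mem_singleton_iff] at hmem5
      rw [hu_eq', hmem5]

theorem sw_sub {W' : Subgroup W} {t : W} (ht : t ∈ D.SW W') : t ∈ W' := by
  have h : t ∈ D.Nbar t ∩ (W' : Set W) := by rw [ht.2]; exact Set.mem_singleton t
  exact h.2

theorem main₁ (W' : Subgroup W) :
    ∀ x ∈ Set.range D.α, x ∉ D.PhiSub₁ W' →
      D.Delta₁ (Subgroup.map (MulAut.conj (D.refl₁ x)).toMonoidHom W') =
        D.ρ₁ (D.refl₁ x) '' D.Delta₁ W' := by
  rintro x ⟨s, rfl⟩ hx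
  rw [D.refl₁_alpha]
  have hs : D.r s ∉ W' := fun h => hx ⟨D.mem_Phi₁_alpha s, by rw [D.refl₁_alpha]; exact h⟩
  set W'' := Subgroup.map (MulAut.conj (D.r s)).toMonoidHom W' with hW''
  have hs'' : D.r s ∉ W'' := by
    intro h
    obtain ⟨v, hv, hveq⟩ := Subgroup.mem_map.1 h
    simp only [MulEquiv.coe_toMonoidHom, MulAut.conj_apply] at hveq
    apply hs
    have h2 : v = (D.r s)⁻¹ * (D.r s * v * (D.r s)⁻¹) * D.r s := by group
    rw [hveq, D.r_inv] at h2
    have h3 : v = D.r s := by rw [h2, D.r_sq, one_mul]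
    rwa [h3] at hv
  have hdouble : Subgroup.map (MulAut.conj (D.r s)).toMonoidHom W'' = W' := by
    rw [hW'', Subgroup.map_map]
    have hid : ((MulAut.conj (D.r s)).toMonoidHom.comp (MulAut.conj (D.r s)).toMonoidHom) =
        MonoidHom.id W := by
      ext v
      simp only [MonoidHom.comp_apply, MulEquiv.coe_toMonoidHom, MulAut.conj_apply,
        MonoidHom.id_apply, D.r_inv]
      calc D.r s * (D.r s * v * D.r s) * D.r s
          = (D.r s * D.r s) * v * (D.r s * D.r s) := by group
        _ = v := by rw [D.r_sq, one_mul, mul_one]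
    rw [hid, Subgroup.map_id]
  ext v
  constructor
  · rintro ⟨hvpos, hvSW⟩
    have hvW'' : D.refl₁ v ∈ W'' := D.sw_sub hvSW
    have hvne : D.refl₁ v ≠ D.r s := fun h => hs'' (h ▸ hvW'')
    have hz : D.ρ₁ (D.r s) v ∈ D.PhiPos₁ := (D.key_alt hvpos s).resolve_right hvne
    refine ⟨D.ρ₁ (D.r s) v, ⟨hz, ?_⟩, ?_⟩
    · have h5 : D.refl₁ (D.ρ₁ (D.r s) v) = D.r s * D.refl₁ v * D.r s := by
        rw [D.refl₁_rho _ hvpos.1, D.r_inv]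
      rw [h5, ← hdouble]
      exact D.sw_conj s hs'' hvSW
    · rw [← D.rho₁_mul_apply, D.r_sq, D.rho₁_one_apply]
  · rintro ⟨z, ⟨hzpos, hzSW⟩, rfl⟩
    have hzW' : D.refl₁ z ∈ W' := D.sw_sub hzSW
    have hzne : D.refl₁ z ≠ D.r s := fun h => hs (h ▸ hzW')
    have hz : D.ρ₁ (D.r s) z ∈ D.PhiPos₁ := (D.key_alt hzpos s).resolve_right hzne
    refine ⟨hz, ?_⟩
    have h5 : D.refl₁ (D.ρ₁ (D.r s) z) = D.r s * D.refl₁ z * D.r s := by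
      rw [D.refl₁_rho _ hzpos.1, D.r_inv]
    rw [h5]
    exact D.sw_conj s hs hzSW

/-- The dual Coxeter datum, interchanging the roles of `V₁` and `V₂`. -/
def dual (D : CoxeterDatum S V₁ V₂ W) : CoxeterDatum S V₂ V₁ W where
  pair := D.pair.flip
  α := D.β
  β := D.α
  α_inj := D.β_inj
  β_inj := D.α_inj
  D1 := fun s => by simpa [LinearMap.flip_apply] using D.D1 s
  D2a := D.D2b
  D2b := D.D2a
  D2c := D.D2d
  D2d := D.D2c
  D3 := fun s t h => by simpa [LinearMap.flip_apply] using D.D3 t s (fun hh => h hh.symm)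
  D4 := fun s t h => by
    simp only [LinearMap.flip_apply] at h ⊢
    exact D.D4 t s h
  D5 := fun s t h => by
    simpa [LinearMap.flip_apply, mul_comm] using D.D5 t s (fun hh => h hh.symm)
  r := D.r
  r_gen := D.r_gen
  r_ne_one := D.r_ne_one
  r_sq := D.r_sq
  ρ₁ := D.ρ₂
  ρ₂ := D.ρ₁
  ρ₁_inj := D.ρ₂_inj
  ρ₂_inj := D.ρ₁_inj
  hr₁ := fun s y => by simpa [LinearMap.flip_apply] using D.hr₂ s y
  hr₂ := fun s x => by simpa [LinearMap.flip_apply] using D.hr₁ s x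
  pair_inv := fun w y x => by simpa [LinearMap.flip_apply] using D.pair_inv w x y
  phi := D.phiInv
  phiInv := D.phi
  refl₁ := D.refl₂
  refl₂ := D.refl₁
  decomp₁ := D.decomp₂
  disj₁ := D.disj₂
  decomp₂ := D.decomp₁
  disj₂ := D.disj₁
  phi_mem := D.phiInv_mem
  phiInv_mem := D.phi_mem
  phiInv_phi := D.phi_phiInv
  phi_phiInv := D.phiInv_phi
  phi_simple := fun s => D.phiInv_beta s
  phi_equiv := fun w y hy => D.phiInv_rho w hy
  refl₁_eq := D.refl₂_eq
  refl₂_eq := D.refl₁_eq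
  refl₁_act := fun y hy v => by simpa [LinearMap.flip_apply] using D.refl₂_act y hy v
  refl₂_act := fun x hx v => by simpa [LinearMap.flip_apply] using D.refl₁_act x hx v

end CoxeterDatum

/-- Let `W'` be a reflection subgroup, `i ∈ {1,2}`, and let
`x ∈ Πᵢ \ Φᵢ(W')` be a simple root whose reflection does not lie in `W'`.  Then
`Δᵢ(r_x W' r_x) = r_x · Δᵢ(W')` (here `r_x W' r_x = r_x W' r_x⁻¹` since `r_x` is an
involution). -/
theorem stmt13 {S V₁ V₂ W : Type*} [AddCommGroup V₁] [Module ℝ V₁]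
    [AddCommGroup V₂] [Module ℝ V₂] [Group W]
    (D : CoxeterDatum S V₁ V₂ W)
    (W' : Subgroup W) (hW' : D.IsReflectionSubgroup W') :
    (∀ x ∈ Set.range D.α, x ∉ D.PhiSub₁ W' →
      D.Delta₁ (Subgroup.map (MulAut.conj (D.refl₁ x)).toMonoidHom W') =
        D.ρ₁ (D.refl₁ x) '' D.Delta₁ W') ∧
    (∀ y ∈ Set.range D.β, y ∉ D.PhiSub₂ W' →
      D.Delta₂ (Subgroup.map (MulAut.conj (D.refl₂ y)).toMonoidHom W') =
        D.ρ₂ (D.refl₂ y) '' D.Delta₂ W') := by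
  exact ⟨D.main₁ W', D.dual.main₁ W'⟩
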